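/- For all integers m, n ≥ 0, all x, y ∈ ℝ with |x| ≤ 1, |y| ≤ 1 and all ρ ∈ ℝ with |ρ| < 1, one has ∑_{j=0}^{∞} ρ^j · U_{j+m}(x) · U_{j+n}(y) = [ (ρ²x + x − 2ρy)·U_{m−1}(x)·T_n(y) + (−ρ³ + ρ − 2ρx² + 3ρ²xy + xy − 2ρy²)·U_{m−1}(x)·U_{n−1}(y) + (−2ρx + ρ²y + y)·T_m(x)·U_{n−1}(y) + (1 − ρ²)·T_m(x)·T_n(y) ] / w₂(x,y|ρ). -/

import Mathlib

open Polynomial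

lemma chebT_bound (k : ℤ) {x : ℝ} (hx : |x| ≤ 1) : |(Chebyshev.T ℝ k).eval x| ≤ 1 := by
  rw [abs_le] at hx
  have h := Chebyshev.T_real_cos (Real.arccos x) k
  rw [Real.cos_arccos hx.1 hx.2] at h
  rw [h]
  exact Real.abs_cos_le_one _

lemma chebU_bound (k : ℕ) {x : ℝ} (hx : |x| ≤ 1) :
    |(Chebyshev.U ℝ (k : ℤ)).eval x| ≤ (k : ℝ) + 1 := by
  induction k with
  | zero => simp [Chebyshev.U_zero]
  | succ k ih =>
    have h : Chebyshev.U ℝ ((k : ℤ) + 1) = X * Chebyshev.U ℝ (k : ℤ)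
        + Chebyshev.T ℝ ((k : ℤ) + 1) := Chebyshev.U_eq_X_mul_U_add_T ℝ k
    push_cast
    rw [h, eval_add, eval_mul, eval_X]
    calc |x * (Chebyshev.U ℝ (k : ℤ)).eval x + (Chebyshev.T ℝ ((k : ℤ) + 1)).eval x|
        ≤ |x * (Chebyshev.U ℝ (k : ℤ)).eval x| + |(Chebyshev.T ℝ ((k : ℤ) + 1)).eval x| :=
          abs_add_le _ _
      _ ≤ 1 * ((k : ℝ) + 1) + 1 := by
          gcongr
          · rw [abs_mul]
            calc |x| * |(Chebyshev.U ℝ (k : ℤ)).eval x| ≤ 1 * ((k : ℝ) + 1) := by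
                  apply mul_le_mul hx ih (abs_nonneg _) zero_le_one
              _ = 1 * ((k : ℝ) + 1) := rfl
          · exact chebT_bound _ hx
      _ = (k : ℝ) + 1 + 1 := by ring

lemma chebU_step2 (x : ℝ) (r : ℤ) :
    (Chebyshev.U ℝ (r + 2)).eval x
      = 2 * x * (Chebyshev.U ℝ (r + 1)).eval x - (Chebyshev.U ℝ r).eval x := by
  rw [Chebyshev.U_add_two]
  simp

lemma cheb_prod_recur (x y : ℝ) (p q : ℤ) :
    (Chebyshev.U ℝ (p + 4)).eval x * (Chebyshev.U ℝ (q + 4)).eval y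
      - 4 * x * y * ((Chebyshev.U ℝ (p + 3)).eval x * (Chebyshev.U ℝ (q + 3)).eval y)
      + (4 * x ^ 2 + 4 * y ^ 2 - 2) *
          ((Chebyshev.U ℝ (p + 2)).eval x * (Chebyshev.U ℝ (q + 2)).eval y)
      - 4 * x * y * ((Chebyshev.U ℝ (p + 1)).eval x * (Chebyshev.U ℝ (q + 1)).eval y)
      + (Chebyshev.U ℝ p).eval x * (Chebyshev.U ℝ q).eval y = 0 := by
  have hu2 := chebU_step2 x p
  have hv2 := chebU_step2 y q
  have hu3 : (Chebyshev.U ℝ (p + 3)).eval x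
      = 2 * x * (Chebyshev.U ℝ (p + 2)).eval x - (Chebyshev.U ℝ (p + 1)).eval x := by
    have := chebU_step2 x (p + 1)
    rwa [show p + 1 + 2 = p + 3 by ring, show p + 1 + 1 = p + 2 by ring] at this
  have hv3 : (Chebyshev.U ℝ (q + 3)).eval y
      = 2 * y * (Chebyshev.U ℝ (q + 2)).eval y - (Chebyshev.U ℝ (q + 1)).eval y := by
    have := chebU_step2 y (q + 1)
    rwa [show q + 1 + 2 = q + 3 by ring, show q + 1 + 1 = q + 2 by ring] at this
  have hu4 : (Chebyshev.U ℝ (p + 4)).eval x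
      = 2 * x * (Chebyshev.U ℝ (p + 3)).eval x - (Chebyshev.U ℝ (p + 2)).eval x := by
    have := chebU_step2 x (p + 2)
    rwa [show p + 2 + 2 = p + 4 by ring, show p + 2 + 1 = p + 3 by ring] at this
  have hv4 : (Chebyshev.U ℝ (q + 4)).eval y
      = 2 * y * (Chebyshev.U ℝ (q + 3)).eval y - (Chebyshev.U ℝ (q + 2)).eval y := by
    have := chebU_step2 y (q + 2)
    rwa [show q + 2 + 2 = q + 4 by ring, show q + 2 + 1 = q + 3 by ring] at this
  rw [hu4, hv4, hu3, hv3, hu2, hv2]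
  ring

lemma w2_pos {x y ρ : ℝ} (hx : |x| ≤ 1) (hy : |y| ≤ 1) (hρ : |ρ| < 1) :
    0 < (1 - ρ ^ 2) ^ 2 - 4 * x * y * ρ * (1 + ρ ^ 2) + 4 * ρ ^ 2 * (x ^ 2 + y ^ 2) := by
  have hx2 : x ^ 2 ≤ 1 := by nlinarith [sq_abs x, abs_nonneg x]
  have hy2 : y ^ 2 ≤ 1 := by nlinarith [sq_abs y, abs_nonneg y]
  set u := Real.sqrt (1 - x ^ 2) with hu_def
  set v := Real.sqrt (1 - y ^ 2) with hv_def
  have hu : u ^ 2 = 1 - x ^ 2 := Real.sq_sqrt (by linarith)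
  have hv : v ^ 2 = 1 - y ^ 2 := Real.sq_sqrt (by linarith)
  have key : ∀ w : ℝ, |w| ≤ 1 → 0 < 1 + ρ ^ 2 - 2 * ρ * w := by
    intro w hw
    have h1 : ρ * w ≤ |ρ * w| := le_abs_self _
    have h2 : |ρ * w| ≤ |ρ| := by
      rw [abs_mul]; exact mul_le_of_le_one_right (abs_nonneg ρ) hw
    nlinarith [sq_nonneg (1 - |ρ|), sq_abs ρ]
  have hw1 : |x * y + u * v| ≤ 1 := by
    have h : (x * y + u * v) ^ 2 ≤ 1 := by nlinarith [sq_nonneg (x * v - y * u)]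
    rw [abs_le]; constructor <;> nlinarith
  have hw2 : |x * y - u * v| ≤ 1 := by
    have h : (x * y - u * v) ^ 2 ≤ 1 := by nlinarith [sq_nonneg (x * v + y * u)]
    rw [abs_le]; constructor <;> nlinarith
  have hfac : (1 - ρ ^ 2) ^ 2 - 4 * x * y * ρ * (1 + ρ ^ 2) + 4 * ρ ^ 2 * (x ^ 2 + y ^ 2)
      = (1 + ρ ^ 2 - 2 * ρ * (x * y + u * v)) * (1 + ρ ^ 2 - 2 * ρ * (x * y - u * v)) := by
    linear_combination (4 * ρ ^ 2 * v ^ 2) * hu + (4 * ρ ^ 2 * (1 - x ^ 2)) * hv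
  rw [hfac]
  exact mul_pos (key _ hw1) (key _ hw2)

lemma summable_aux (m n : ℕ) {x y ρ : ℝ} (hx : |x| ≤ 1) (hy : |y| ≤ 1) (hρ : |ρ| < 1) :
    Summable (fun j : ℕ => ρ ^ j * (Chebyshev.U ℝ ((j : ℤ) + m)).eval x *
      (Chebyshev.U ℝ ((j : ℤ) + n)).eval y) := by
  have hρ' : ‖|ρ|‖ < 1 := by rwa [Real.norm_eq_abs, abs_abs]
  have h2 := summable_pow_mul_geometric_of_norm_lt_one (R := ℝ) 2 hρ'
  have h1 := summable_pow_mul_geometric_of_norm_lt_one (R := ℝ) 1 hρ'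
  have h0 := summable_pow_mul_geometric_of_norm_lt_one (R := ℝ) 0 hρ'
  have hg : Summable (fun j : ℕ => ((j : ℝ) + 1) ^ 2 * |ρ| ^ j) := by
    refine ((h2.add (h1.mul_left 2)).add h0).congr fun b => ?_
    push_cast
    ring
  apply Summable.of_norm_bounded
    (g := fun j : ℕ => ((m : ℝ) + 1) * ((n : ℝ) + 1) * (((j : ℝ) + 1) ^ 2 * |ρ| ^ j))
    (hg.mul_left _)
  intro j
  have hu : |(Chebyshev.U ℝ ((j : ℤ) + m)).eval x| ≤ ((m : ℝ) + 1) * ((j : ℝ) + 1) := by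
    have h := chebU_bound (j + m) hx
    rw [show (((j + m : ℕ)) : ℤ) = (j : ℤ) + m by push_cast; ring] at h
    push_cast at h
    nlinarith [mul_nonneg (Nat.cast_nonneg (α := ℝ) m) (Nat.cast_nonneg (α := ℝ) j)]
  have hv : |(Chebyshev.U ℝ ((j : ℤ) + n)).eval y| ≤ ((n : ℝ) + 1) * ((j : ℝ) + 1) := by
    have h := chebU_bound (j + n) hy
    rw [show (((j + n : ℕ)) : ℤ) = (j : ℤ) + n by push_cast; ring] at h
    push_cast at h
    nlinarith [mul_nonneg (Nat.cast_nonneg (α := ℝ) n) (Nat.cast_nonneg (α := ℝ) j)]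
  rw [Real.norm_eq_abs, abs_mul, abs_mul, abs_pow]
  calc |ρ| ^ j * |(Chebyshev.U ℝ ((j : ℤ) + m)).eval x| * |(Chebyshev.U ℝ ((j : ℤ) + n)).eval y|
      ≤ |ρ| ^ j * (((m : ℝ) + 1) * ((j : ℝ) + 1)) * (((n : ℝ) + 1) * ((j : ℝ) + 1)) := by
        gcongr <;> positivity
    _ = ((m : ℝ) + 1) * ((n : ℝ) + 1) * (((j : ℝ) + 1) ^ 2 * |ρ| ^ j) := by ring

theorem chebyshev_U_U_shifted_gen_fun (m n : ℕ) (x y ρ : ℝ)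
    (hx : |x| ≤ 1) (hy : |y| ≤ 1) (hρ : |ρ| < 1) :
    ∑' j : ℕ, ρ ^ j * (Chebyshev.U ℝ ((j : ℤ) + m)).eval x *
        (Chebyshev.U ℝ ((j : ℤ) + n)).eval y =
      ((ρ ^ 2 * x + x - 2 * ρ * y) * (Chebyshev.U ℝ ((m : ℤ) - 1)).eval x *
          (Chebyshev.T ℝ (n : ℤ)).eval y +
        (-ρ ^ 3 + ρ - 2 * ρ * x ^ 2 + 3 * ρ ^ 2 * x * y + x * y - 2 * ρ * y ^ 2) *
          (Chebyshev.U ℝ ((m : ℤ) - 1)).eval x * (Chebyshev.U ℝ ((n : ℤ) - 1)).eval y +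
        (-2 * ρ * x + ρ ^ 2 * y + y) * (Chebyshev.T ℝ (m : ℤ)).eval x *
          (Chebyshev.U ℝ ((n : ℤ) - 1)).eval y +
        (1 - ρ ^ 2) * (Chebyshev.T ℝ (m : ℤ)).eval x * (Chebyshev.T ℝ (n : ℤ)).eval y) /
        ((1 - ρ ^ 2) ^ 2 - 4 * x * y * ρ * (1 + ρ ^ 2) + 4 * ρ ^ 2 * (x ^ 2 + y ^ 2)) := by
  have hw := w2_pos hx hy hρ
  set f : ℕ → ℝ := fun j => ρ ^ j * (Chebyshev.U ℝ ((j : ℤ) + m)).eval x *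
      (Chebyshev.U ℝ ((j : ℤ) + n)).eval y with hfdef
  have hf : Summable f := summable_aux m n hx hy hρ
  have hfk : ∀ k : ℕ, Summable fun j => f (j + k) := fun k => (summable_nat_add_iff k).2 hf
  rw [eq_div_iff (ne_of_gt hw)]
  have tails : ∀ k : ℕ, ∑' j, f (j + k) = (∑' j, f j) - ∑ i ∈ Finset.range k, f i := by
    intro k
    have h := Summable.sum_add_tsum_nat_add (f := f) k hf
    linarith
  have hpt : ∀ j : ℕ, f (j + 4) - 4*x*y*ρ * f (j + 3) + (4*x^2+4*y^2-2) * ρ^2 * f (j + 2)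
      - 4*x*y*ρ^3 * f (j + 1) + ρ^4 * f j = 0 := by
    intro j
    have hkey := cheb_prod_recur x y ((j : ℤ) + m) ((j : ℤ) + n)
    simp only [hfdef]
    push_cast
    rw [show (j:ℤ) + 4 + m = ((j:ℤ) + m) + 4 by ring, show (j:ℤ) + 4 + n = ((j:ℤ) + n) + 4 by ring,
        show (j:ℤ) + 3 + m = ((j:ℤ) + m) + 3 by ring, show (j:ℤ) + 3 + n = ((j:ℤ) + n) + 3 by ring,
        show (j:ℤ) + 2 + m = ((j:ℤ) + m) + 2 by ring, show (j:ℤ) + 2 + n = ((j:ℤ) + n) + 2 by ring,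
        show (j:ℤ) + 1 + m = ((j:ℤ) + m) + 1 by ring, show (j:ℤ) + 1 + n = ((j:ℤ) + n) + 1 by ring]
    linear_combination (ρ ^ (j + 4)) * hkey
  have hzero : ∑' j, (f (j + 4) - 4*x*y*ρ * f (j + 3) + (4*x^2+4*y^2-2) * ρ^2 * f (j + 2)
      - 4*x*y*ρ^3 * f (j + 1) + ρ^4 * f j) = 0 := by
    calc ∑' j, (f (j + 4) - 4*x*y*ρ * f (j + 3) + (4*x^2+4*y^2-2) * ρ^2 * f (j + 2)
        - 4*x*y*ρ^3 * f (j + 1) + ρ^4 * f j) = ∑' _ : ℕ, (0:ℝ) := tsum_congr hpt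
      _ = 0 := tsum_zero
  have s3 := (hfk 3).mul_left (4*x*y*ρ)
  have s2 := (hfk 2).mul_left ((4*x^2+4*y^2-2) * ρ^2)
  have s1 := (hfk 1).mul_left (4*x*y*ρ^3)
  have s0 := hf.mul_left (ρ^4)
  have E : (∑' j, f (j + 4)) - 4*x*y*ρ * (∑' j, f (j + 3))
      + (4*x^2+4*y^2-2) * ρ^2 * (∑' j, f (j + 2))
      - 4*x*y*ρ^3 * (∑' j, f (j + 1)) + ρ^4 * (∑' j, f j) = 0 := by
    rw [← tsum_mul_left, ← tsum_mul_left, ← tsum_mul_left, ← tsum_mul_left,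
        ← Summable.tsum_sub (hfk 4) s3, ← Summable.tsum_add ((hfk 4).sub s3) s2,
        ← Summable.tsum_sub (((hfk 4).sub s3).add s2) s1,
        ← Summable.tsum_add ((((hfk 4).sub s3).add s2).sub s1) s0]
    exact hzero
  rw [tails 4, tails 3, tails 2, tails 1] at E
  simp only [Finset.sum_range_succ, Finset.sum_range_zero, zero_add] at E
  have hf0 : f 0 = (Chebyshev.U ℝ (m:ℤ)).eval x * (Chebyshev.U ℝ (n:ℤ)).eval y := by
    simp [hfdef]
  have hf1 : f 1 = ρ * ((Chebyshev.U ℝ ((m:ℤ)+1)).eval x * (Chebyshev.U ℝ ((n:ℤ)+1)).eval y) := by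
    simp only [hfdef]
    push_cast
    rw [show (1:ℤ) + m = (m:ℤ) + 1 by ring, show (1:ℤ) + n = (n:ℤ) + 1 by ring]
    ring
  have hf2 : f 2 = ρ^2 * ((Chebyshev.U ℝ ((m:ℤ)+2)).eval x * (Chebyshev.U ℝ ((n:ℤ)+2)).eval y) := by
    simp only [hfdef]
    push_cast
    rw [show (2:ℤ) + m = (m:ℤ) + 2 by ring, show (2:ℤ) + n = (n:ℤ) + 2 by ring]
    ring
  have hf3 : f 3 = ρ^3 * ((Chebyshev.U ℝ ((m:ℤ)+3)).eval x * (Chebyshev.U ℝ ((n:ℤ)+3)).eval y) := by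
    simp only [hfdef]
    push_cast
    rw [show (3:ℤ) + m = (m:ℤ) + 3 by ring, show (3:ℤ) + n = (n:ℤ) + 3 by ring]
    ring
  rw [hf0, hf1, hf2, hf3] at E
  have hu0 : (Chebyshev.U ℝ (m:ℤ)).eval x
      = x * (Chebyshev.U ℝ ((m:ℤ)-1)).eval x + (Chebyshev.T ℝ (m:ℤ)).eval x := by
    have h := Chebyshev.U_eq_X_mul_U_add_T ℝ ((m:ℤ) - 1)
    rw [show (m:ℤ) - 1 + 1 = (m:ℤ) by ring] at h
    rw [h]; simp
  have hu1 : (Chebyshev.U ℝ ((m:ℤ)+1)).eval x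
      = 2*x*(Chebyshev.U ℝ (m:ℤ)).eval x - (Chebyshev.U ℝ ((m:ℤ)-1)).eval x := by
    have h := chebU_step2 x ((m:ℤ) - 1)
    rwa [show (m:ℤ)-1+2 = (m:ℤ)+1 by ring, show (m:ℤ)-1+1 = (m:ℤ) by ring] at h
  have hu2 : (Chebyshev.U ℝ ((m:ℤ)+2)).eval x
      = 2*x*(Chebyshev.U ℝ ((m:ℤ)+1)).eval x - (Chebyshev.U ℝ (m:ℤ)).eval x := chebU_step2 x m
  have hu3 : (Chebyshev.U ℝ ((m:ℤ)+3)).eval x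
      = 2*x*(Chebyshev.U ℝ ((m:ℤ)+2)).eval x - (Chebyshev.U ℝ ((m:ℤ)+1)).eval x := by
    have h := chebU_step2 x ((m:ℤ) + 1)
    rwa [show (m:ℤ)+1+2 = (m:ℤ)+3 by ring, show (m:ℤ)+1+1 = (m:ℤ)+2 by ring] at h
  have hv0 : (Chebyshev.U ℝ (n:ℤ)).eval y
      = y * (Chebyshev.U ℝ ((n:ℤ)-1)).eval y + (Chebyshev.T ℝ (n:ℤ)).eval y := by
    have h := Chebyshev.U_eq_X_mul_U_add_T ℝ ((n:ℤ) - 1)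
    rw [show (n:ℤ) - 1 + 1 = (n:ℤ) by ring] at h
    rw [h]; simp
  have hv1 : (Chebyshev.U ℝ ((n:ℤ)+1)).eval y
      = 2*y*(Chebyshev.U ℝ (n:ℤ)).eval y - (Chebyshev.U ℝ ((n:ℤ)-1)).eval y := by
    have h := chebU_step2 y ((n:ℤ) - 1)
    rwa [show (n:ℤ)-1+2 = (n:ℤ)+1 by ring, show (n:ℤ)-1+1 = (n:ℤ) by ring] at h
  have hv2 : (Chebyshev.U ℝ ((n:ℤ)+2)).eval y
      = 2*y*(Chebyshev.U ℝ ((n:ℤ)+1)).eval y - (Chebyshev.U ℝ (n:ℤ)).eval y := chebU_step2 y n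
  have hv3 : (Chebyshev.U ℝ ((n:ℤ)+3)).eval y
      = 2*y*(Chebyshev.U ℝ ((n:ℤ)+2)).eval y - (Chebyshev.U ℝ ((n:ℤ)+1)).eval y := by
    have h := chebU_step2 y ((n:ℤ) + 1)
    rwa [show (n:ℤ)+1+2 = (n:ℤ)+3 by ring, show (n:ℤ)+1+1 = (n:ℤ)+2 by ring] at h
  rw [hu3, hv3, hu2, hv2, hu1, hv1, hu0, hv0] at E
  linear_combination E
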